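/- For all bounded linear operators A, B, X on a complex Hilbert space H, ‖A*AX‖ · ‖X B B*‖ ≥ ‖AXB‖². -/

import Mathlib

open scoped ENNReal

lemma spectralRadius_mul_comm' {A : Type*} [NormedRing A] [NormedAlgebra ℂ A]
    (a b : A) : spectralRadius ℂ (a * b) = spectralRadius ℂ (b * a) := by
  have key : ∀ x y : A, spectralRadius ℂ (x * y) ≤ spectralRadius ℂ (y * x) := by
    intro x y
    rw [spectralRadius, spectralRadius]
    refine iSup₂_le fun k hk => ?_
    by_cases hk0 : k = 0
    · simp [hk0]
    · have : k ∈ spectrum ℂ (x * y) \ {0} := ⟨hk, hk0⟩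
      rw [spectrum.nonzero_mul_comm] at this
      exact le_iSup₂ (f := fun k (_ : k ∈ spectrum ℂ (y * x)) => (‖k‖₊ : ℝ≥0∞)) k this.1
  exact le_antisymm (key a b) (key b a)

theorem agmi_prod (H : Type*) [NormedAddCommGroup H] [InnerProductSpace ℂ H]
    [CompleteSpace H] (A B X : H →L[ℂ] H) :
    ‖(star A) * A * X‖ * ‖X * B * (star B)‖ ≥ ‖A * X * B‖ ^ 2 := by
  rcases subsingleton_or_nontrivial H with hs | hn
  · have : (A * X * B) = 0 := Subsingleton.elim _ _
    simp [this, mul_nonneg (norm_nonneg _) (norm_nonneg _)]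
  have h1 : ‖A * X * B‖ ^ 2 = ‖star (A * X * B) * (A * X * B)‖ := by
    rw [CStarRing.norm_star_mul_self, sq]
  have hsa : IsSelfAdjoint (star (A * X * B) * (A * X * B)) :=
    IsSelfAdjoint.star_mul_self _
  have h2 : (‖star (A * X * B) * (A * X * B)‖₊ : ℝ≥0∞)
      = spectralRadius ℂ (star (A * X * B) * (A * X * B)) :=
    (hsa.spectralRadius_eq_nnnorm).symm
  -- rewrite star (AXB) * (AXB) = (B* X* A*) * (A X B) and cyclically permute
  have h3 : spectralRadius ℂ (star (A * X * B) * (A * X * B))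
      = spectralRadius ℂ ((star A * A * X) * (B * (star B * (star X)))) := by
    have e1 : star (A * X * B) * (A * X * B)
        = (star B) * (star X * (star A * (A * (X * B)))) := by
      simp [star_mul, mul_assoc]
    rw [e1, spectralRadius_mul_comm',
      show star X * (star A * (A * (X * B))) * star B
        = (star X) * (star A * (A * (X * (B * star B)))) by simp [mul_assoc],
      spectralRadius_mul_comm']
    simp [mul_assoc]
  have h4 : spectralRadius ℂ ((star A * A * X) * (B * (star B * (star X))))
      ≤ ‖(star A * A * X) * (B * (star B * (star X)))‖₊ :=
    spectrum.spectralRadius_le_nnnorm _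
  have h5 : ‖(star A * A * X) * (B * (star B * (star X)))‖
      ≤ ‖star A * A * X‖ * ‖X * B * star B‖ := by
    calc ‖(star A * A * X) * (B * (star B * (star X)))‖
        ≤ ‖star A * A * X‖ * ‖B * (star B * star X)‖ := norm_mul_le _ _
      _ = ‖star A * A * X‖ * ‖X * B * star B‖ := by
          congr 1
          have : B * (star B * star X) = star (X * B * star B) := by
            simp [star_mul, mul_assoc]
          rw [this, norm_star]
  have key : ‖star (A * X * B) * (A * X * B)‖
      ≤ ‖star A * A * X‖ * ‖X * B * star B‖ := by
    have := h2.trans_le (h3.le.trans h4)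
    have h2' : ‖star (A * X * B) * (A * X * B)‖
        ≤ ‖(star A * A * X) * (B * (star B * (star X)))‖ := by
      exact_mod_cast this
    exact h2'.trans h5
  rw [ge_iff_le, h1]
  exact key
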